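/- Let S₁ be a unitary commutative semiring and S₂ an idempotent commutative semiring (i.e., x·x = x for all x ∈ S₂). Then every ideal of S₁ × S₂ is directly decomposable. -/
import Mathlib

/-- An ideal of a (possibly non-unital) commutative semiring. -/
def IsSemiringIdeal {S : Type*} [NonUnitalCommSemiring S] (I : Set S) : Prop :=
  (0 : S) ∈ I ∧ (∀ a b : S, a ∈ I → b ∈ I → a + b ∈ I) ∧ (∀ a s : S, a ∈ I → a * s ∈ I)

theorem stmt_5 {S₁ S₂ : Type*} [CommSemiring S₁] [NonUnitalCommSemiring S₂]
    (hidem : ∀ x : S₂, x * x = x)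
    (I : Set (S₁ × S₂)) (hI : IsSemiringIdeal I) :
    ∃ I₁ : Set S₁, ∃ I₂ : Set S₂,
      IsSemiringIdeal I₁ ∧ IsSemiringIdeal I₂ ∧ I = I₁ ×ˢ I₂ := by
  obtain ⟨h0, hadd, hmul⟩ := hI
  refine ⟨{a | (a, 0) ∈ I}, {b | ((0 : S₁), b) ∈ I}, ⟨h0, ?_, ?_⟩, ⟨h0, ?_, ?_⟩, ?_⟩
  · intro a b ha hb
    have := hadd _ _ ha hb
    simpa using this
  · intro a s ha
    have := hmul (a, 0) (s, 0) ha
    simpa using this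
  · intro a b ha hb
    have := hadd _ _ ha hb
    simpa using this
  · intro a s ha
    have := hmul ((0 : S₁), a) (0, s) ha
    simpa using this
  · ext ⟨a, b⟩
    simp only [Set.mem_prod, Set.mem_setOf_eq]
    constructor
    · intro hab
      constructor
      · have := hmul (a, b) (1, 0) hab
        simpa using this
      · have := hmul (a, b) (0, b) hab
        simpa [hidem b] using this
    · rintro ⟨h1, h2⟩
      have := hadd _ _ h1 h2
      simpa using this
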